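/- For the scaled Laguerre recurrence coefficients a_{j,n} = √(j(j+γ))/n and b_{j,n} = (2j+γ+1)/n with fixed γ > −1, the following exact/asymptotic cancellations hold uniformly for j in any window |j−n| ≤ n^{β} with β < 1: (i) a_{j,n} a_{j−2,n} − a_{j−1,n}² = −1/n² + O(n^{−4}); (ii) with x_0 = 0, (b_{j−1,n} − a_{j,n}) a_{j−2,n} − (b_{j−2,n} − a_{j−1,n}) a_{j−1,n} = −γ²/(2n³) + O(n^{β−4}); and (iii) b_{n−1,n} − 2√(a_{n,n} a_{n−1,n}) = (γ²+1)/(4n²) + O(n^{−3}) as n → ∞. -/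

import Mathlib

/-- Scaled Laguerre recurrence coefficient `a_{j,n} = √(j(j+γ))/n`. -/
noncomputable def lagA (γ : ℝ) (j n : ℕ) : ℝ :=
  Real.sqrt ((j : ℝ) * ((j : ℝ) + γ)) / (n : ℝ)

/-- Scaled Laguerre recurrence coefficient `b_{j,n} = (2j+γ+1)/n`. -/
noncomputable def lagB (γ : ℝ) (j n : ℕ) : ℝ :=
  (2 * (j : ℝ) + γ + 1) / (n : ℝ)

lemma aux_sqrt_lin (A G : ℝ) (hG : 0 ≤ G) (hA : 0 < A) (hP : 0 ≤ A^2 - G) :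
    |Real.sqrt (A^2 - G) - A| ≤ G / A := by
  set u := Real.sqrt (A^2 - G) with hu
  have hu0 : 0 ≤ u := Real.sqrt_nonneg _
  have hu2 : u^2 = A^2 - G := Real.sq_sqrt hP
  have huA : u ≤ A := by nlinarith
  rw [abs_sub_comm, abs_of_nonneg (by linarith), le_div_iff₀ hA]
  nlinarith [mul_nonneg (sub_nonneg.mpr huA) hu0]

lemma aux_sqrt_quad (s c : ℝ) (hc : 0 ≤ c) (hs : 0 < s) (hcs : c ≤ s^2) :
    |Real.sqrt (s^2 - c) - (s - c/(2*s))| ≤ c^2/(2*s^3) := by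
  set u := Real.sqrt (s^2 - c) with hu
  have hu0 : 0 ≤ u := Real.sqrt_nonneg _
  have hu2 : u^2 = s^2 - c := Real.sq_sqrt (by nlinarith)
  have hprod : (2*s*u - (2*s^2 - c)) * (2*s*u + (2*s^2 - c)) = -c^2 := by
    linear_combination 4*s^2 * hu2
  have hD : s^2 ≤ 2*s*u + (2*s^2 - c) := by nlinarith [mul_nonneg hs.le hu0]
  have hXneg : 2*s*u - (2*s^2 - c) ≤ 0 := by
    by_contra h
    push_neg at h
    nlinarith [mul_pos h (lt_of_lt_of_le (by positivity : (0:ℝ) < s^2) hD)]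
  have key : |2*s*u - (2*s^2 - c)| ≤ c^2 / s^2 := by
    rw [abs_of_nonpos hXneg, le_div_iff₀ (by positivity)]
    nlinarith [mul_nonneg (neg_nonneg.mpr hXneg) (sub_nonneg.mpr hD)]
  have heq : u - (s - c/(2*s)) = (2*s*u - (2*s^2 - c))/(2*s) := by
    have hs0 : s ≠ 0 := ne_of_gt hs
    field_simp
  rw [heq, abs_div, abs_of_pos (by positivity : (0:ℝ) < 2*s)]
  calc |2*s*u - (2*s^2 - c)| / (2*s) ≤ (c^2/s^2) / (2*s) := by gcongr
    _ = c^2/(2*s^3) := by rw [div_div]; congr 1; ring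

lemma aux_sq_le {a w : ℝ} (hw : 0 ≤ w) (ha : 0 ≤ a) (h : a^2 ≤ w^2) : a ≤ w := by
  nlinarith


set_option maxHeartbeats 2000000 in
/-- For the scaled Laguerre recurrence coefficients
`a_{j,n} = √(j(j+γ))/n`, `b_{j,n} = (2j+γ+1)/n` with fixed `γ > −1`, uniformly for `j` in
any window `|j − n| ≤ n^β` with fixed `0 < β < 1`, as `n → ∞`:
(i) `a_{j,n} a_{j−2,n} − a_{j−1,n}² = −1/n² + O(n^{−4})`;
(ii) with `x₀ = 0`,
`(b_{j−1,n} − a_{j,n}) a_{j−2,n} − (b_{j−2,n} − a_{j−1,n}) a_{j−1,n} = −γ²/(2n³) + O(n^{β−4})`;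
(iii) `b_{n−1,n} − 2√(a_{n,n} a_{n−1,n}) = (γ²+1)/(4n²) + O(n^{−3})`. -/
theorem stmt19 (γ : ℝ) (hγ : -1 < γ) (β : ℝ) (hβ0 : 0 < β) (hβ1 : β < 1) :
    ∃ C > (0 : ℝ), ∃ N₀ : ℕ, ∀ n : ℕ, N₀ ≤ n →
      (∀ j : ℕ, 2 ≤ j → |(j : ℝ) - (n : ℝ)| ≤ (n : ℝ) ^ β →
        (|lagA γ j n * lagA γ (j - 2) n - lagA γ (j - 1) n ^ 2 - (-1 / (n : ℝ) ^ 2)|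
            ≤ C / (n : ℝ) ^ 4 ∧
         |(lagB γ (j - 1) n - lagA γ j n) * lagA γ (j - 2) n
              - (lagB γ (j - 2) n - lagA γ (j - 1) n) * lagA γ (j - 1) n
              - (-(γ ^ 2) / (2 * (n : ℝ) ^ 3))|
            ≤ C * (n : ℝ) ^ (β - 4))) ∧
      |lagB γ (n - 1) n - 2 * Real.sqrt (lagA γ n n * lagA γ (n - 1) n)
          - (γ ^ 2 + 1) / (4 * (n : ℝ) ^ 2)|
        ≤ C / (n : ℝ) ^ 3 := by
  obtain ⟨K, hKdef⟩ : ∃ K : ℝ, K = 1 + γ^2 := ⟨_, rfl⟩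
  have hK1 : (1:ℝ) ≤ K := by rw [hKdef]; nlinarith [sq_nonneg γ]
  have hK0 : (0:ℝ) < K := by linarith
  have hγK : |γ| ≤ K := by
    rw [hKdef]
    rcases abs_cases γ with ⟨h, _⟩ | ⟨h, _⟩ <;> nlinarith [sq_nonneg (γ-1), sq_nonneg (γ+1)]
  -- threshold for n^β ≤ n/4
  have htend : Filter.Tendsto (fun n : ℕ => (n:ℝ)^(β-1)) Filter.atTop (nhds 0) := by
    have h := (tendsto_rpow_neg_atTop (by linarith : (0:ℝ) < 1 - β)).comp
      tendsto_natCast_atTop_atTop (α := ℕ)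
    convert h using 2 with n
    rw [Function.comp_apply, neg_sub]
  obtain ⟨N₁, hN₁⟩ : ∃ N₁ : ℕ, ∀ n : ℕ, N₁ ≤ n → (n:ℝ)^(β-1) ≤ 1/4 := by
    have := (Metric.tendsto_atTop.mp htend) (1/4) (by norm_num)
    obtain ⟨N, hN⟩ := this
    exact ⟨N, fun n hn => by
      have := hN n hn
      rw [Real.dist_eq, sub_zero] at this
      exact le_of_lt (lt_of_abs_lt this)⟩
  obtain ⟨N₂, hN₂⟩ := exists_nat_ge (300*K)
  refine ⟨100*K^2, by positivity, max N₁ N₂, fun n hn => ?_⟩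
  have hnN1 : N₁ ≤ n := le_trans (le_max_left _ _) hn
  have hnN2 : N₂ ≤ n := le_trans (le_max_right _ _) hn
  have hn300 : 300*K ≤ (n:ℝ) := le_trans hN₂ (Nat.cast_le.mpr hnN2)
  have hn1 : (1:ℝ) ≤ (n:ℝ) := by linarith
  have hn0 : (0:ℝ) < (n:ℝ) := by linarith
  have hγlb : -K ≤ γ := (abs_le.mp hγK).1
  have hγub : γ ≤ K := (abs_le.mp hγK).2
  have hnsq : (n:ℝ) ≤ (n:ℝ)^2 := by linarith [mul_le_mul_of_nonneg_left hn1 hn0.le, sq_abs (n:ℝ), sq_nonneg (n:ℝ), (by ring : (n:ℝ)*(n:ℝ) = (n:ℝ)^2)]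
  have hβn : (n:ℝ)^β ≤ (n:ℝ)/4 := by
    have h1 : (n:ℝ)^(β-1) ≤ 1/4 := hN₁ n hnN1
    have hsplit : (n:ℝ)^β = (n:ℝ)^(β-1) * (n:ℝ) := by
      rw [← Real.rpow_add_one hn0.ne' (β-1)]
      norm_num
    rw [hsplit]
    linarith [mul_le_mul_of_nonneg_right h1 hn0.le]
  have hB1 : (1:ℝ) ≤ (n:ℝ)^β := by
    have h := Real.rpow_le_rpow_of_exponent_le hn1 (le_of_lt hβ0 : (0:ℝ) ≤ β)
    rwa [Real.rpow_zero] at h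
  constructor
  · -- Parts (i) and (ii)
    intro j hj2 hjB
    have hc1 : ((j-1 : ℕ):ℝ) = (j:ℝ) - 1 := by
      rw [Nat.cast_sub (by omega)]; norm_num
    have hc2 : ((j-2 : ℕ):ℝ) = (j:ℝ) - 2 := by
      rw [Nat.cast_sub (by omega)]; norm_num
    have hjw := abs_le.mp hjB
    have hjlb : 3*(n:ℝ)/4 ≤ (j:ℝ) := by linarith [hβn]
    have hjub : (j:ℝ) ≤ 5*(n:ℝ)/4 := by linarith [hβn]
    obtain ⟨s, hsdef⟩ : ∃ s : ℝ, s = (j:ℝ) - 1 + γ/2 := ⟨_, rfl⟩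
    have hs_lb : (n:ℝ)/2 ≤ s := by rw [hsdef]; linarith
    have hs_ub : s ≤ 2*(n:ℝ) := by rw [hsdef]; linarith
    have hs0 : 0 < s := by linarith
    have hs1_lb : (n:ℝ)/4 ≤ s - 1 := by linarith
    have hs10 : 0 < s - 1 := by linarith
    have hj0 : (0:ℝ) < (j:ℝ) := by linarith
    have hjγ : (0:ℝ) < (j:ℝ) + γ := by linarith
    have hj1 : (0:ℝ) < (j:ℝ) - 1 := by linarith
    have hj1γ : (0:ℝ) < (j:ℝ) - 1 + γ := by linarith
    have hj2' : (0:ℝ) < (j:ℝ) - 2 := by linarith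
    have hj2γ : (0:ℝ) < (j:ℝ) - 2 + γ := by linarith
    obtain ⟨cc, hccdef⟩ : ∃ cc : ℝ, cc = γ^2/4 := ⟨_, rfl⟩
    have hcc0 : 0 ≤ cc := by rw [hccdef]; positivity
    have hccK : cc ≤ K/4 := by rw [hccdef, hKdef]; linarith
    obtain ⟨A, hAdef⟩ : ∃ A : ℝ, A = s^2 - cc - 1 := ⟨_, rfl⟩
    have hs2 : (n:ℝ)^2/4 ≤ s^2 := by
      calc (n:ℝ)^2/4 = ((n:ℝ)/2)^2 := by ring
        _ ≤ s^2 := pow_le_pow_left₀ (by positivity) hs_lb 2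
    have h2K : 2*K ≤ (n:ℝ)^2 := by linarith
    have hA_lb : (n:ℝ)^2/8 ≤ A := by rw [hAdef]; linarith
    have hA0 : 0 < A := by
      have : (0:ℝ) < (n:ℝ)^2/8 := by positivity
      linarith
    have hPid : (j:ℝ)*((j:ℝ)+γ) * (((j:ℝ)-2)*(((j:ℝ)-2)+γ)) = A^2 - γ^2 := by
      rw [hAdef, hsdef, hccdef]; ring
    have hP0 : (0:ℝ) ≤ (j:ℝ)*((j:ℝ)+γ) * (((j:ℝ)-2)*(((j:ℝ)-2)+γ)) := by
      apply mul_nonneg (mul_nonneg hj0.le hjγ.le) (mul_nonneg hj2'.le hj2γ.le)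
    have hAG0 : (0:ℝ) ≤ A^2 - γ^2 := by rw [← hPid]; exact hP0
    obtain ⟨D, hDdef⟩ : ∃ D : ℝ, D = Real.sqrt (A^2 - γ^2) := ⟨_, rfl⟩
    have hδ : |D - A| ≤ γ^2 / A := by
      rw [hDdef]; exact aux_sqrt_lin A (γ^2) (sq_nonneg γ) hA0 hAG0
    have hδ' : |D - A| * (n:ℝ)^2 ≤ 8*K := by
      have h1 : |D - A| * A ≤ γ^2 := by
        rw [← le_div_iff₀ hA0]; exact hδ
      calc |D - A| * (n:ℝ)^2 ≤ |D - A| * (8*A) :=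
            mul_le_mul_of_nonneg_left (by linarith) (abs_nonneg _)
        _ = 8*(|D - A| * A) := by ring
        _ ≤ 8*γ^2 := by linarith
        _ ≤ 8*K := by rw [hKdef]; linarith
    have hx1 : ((j:ℝ)-1)*(((j:ℝ)-1)+γ) = A + 1 := by
      rw [hAdef, hsdef, hccdef]; ring
    have hx1nn : (0:ℝ) ≤ ((j:ℝ)-1)*(((j:ℝ)-1)+γ) := mul_nonneg hj1.le hj1γ.le
    constructor
    · -- Part (i)
      have hgoal1 : lagA γ j n * lagA γ (j-2) n - lagA γ (j-1) n ^2 - (-1/(n:ℝ)^2)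
          = (D - A)/(n:ℝ)^2 := by
        unfold lagA
        rw [hc1, hc2, div_mul_div_comm,
          ← Real.sqrt_mul (mul_nonneg hj0.le hjγ.le), hPid, ← hDdef, div_pow,
          Real.sq_sqrt hx1nn, hx1]
        rw [show (n:ℝ)*(n:ℝ) = (n:ℝ)^2 by ring]
        field_simp
        ring
      rw [hgoal1, abs_div, abs_of_pos (by positivity : (0:ℝ) < (n:ℝ)^2),
        div_le_div_iff₀ (by positivity) (by positivity)]
      have h3 := mul_le_mul_of_nonneg_right hδ' (sq_nonneg (n:ℝ))
      have h4 : 8*K*(n:ℝ)^2 ≤ 100*K^2*(n:ℝ)^2 := by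
        have : 8*K ≤ 100*K^2 := by nlinarith only [hK1, hK0]
        exact mul_le_mul_of_nonneg_right this (sq_nonneg _)
      calc |D - A| * (n:ℝ)^4 = |D - A| * (n:ℝ)^2 * (n:ℝ)^2 := by ring
        _ ≤ 8*K*(n:ℝ)^2 := h3
        _ ≤ 100*K^2*(n:ℝ)^2 := h4
    · -- Part (ii)
      obtain ⟨F, hFdef⟩ : ∃ F : ℝ, F = Real.sqrt ((j:ℝ)*((j:ℝ)+γ)) := ⟨_, rfl⟩
      obtain ⟨F1, hF1def⟩ : ∃ F1 : ℝ, F1 = Real.sqrt (((j:ℝ)-1)*(((j:ℝ)-1)+γ)) := ⟨_, rfl⟩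
      obtain ⟨F2, hF2def⟩ : ∃ F2 : ℝ, F2 = Real.sqrt (((j:ℝ)-2)*(((j:ℝ)-2)+γ)) := ⟨_, rfl⟩
      have hFD : F * F2 = D := by
        rw [hFdef, hF2def, hDdef, ← Real.sqrt_mul (mul_nonneg hj0.le hjγ.le), hPid]
      have hF1sq : F1^2 = A + 1 := by
        rw [hF1def, Real.sq_sqrt hx1nn, hx1]
      have hxs1 : ((j:ℝ)-1)*(((j:ℝ)-1)+γ) = s^2 - cc := by
        rw [hsdef, hccdef]; ring
      have hxs2 : ((j:ℝ)-2)*(((j:ℝ)-2)+γ) = (s-1)^2 - cc := by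
        rw [hsdef, hccdef]; ring
      obtain ⟨r1, hr1def⟩ : ∃ r1 : ℝ, r1 = F1 - (s - cc/(2*s)) := ⟨_, rfl⟩
      obtain ⟨r2, hr2def⟩ : ∃ r2 : ℝ, r2 = F2 - ((s-1) - cc/(2*(s-1))) := ⟨_, rfl⟩
      have hr1b : |r1| ≤ cc^2/(2*s^3) := by
        have h := aux_sqrt_quad s cc hcc0 hs0 (by linarith)
        rw [← hxs1, ← hF1def, ← hr1def] at h
        exact h
      have hs1sq : (n:ℝ)^2/16 ≤ (s-1)^2 := by
        calc (n:ℝ)^2/16 = ((n:ℝ)/4)^2 := by ring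
          _ ≤ (s-1)^2 := pow_le_pow_left₀ (by positivity) hs1_lb 2
      have hr2b : |r2| ≤ cc^2/(2*(s-1)^3) := by
        have h := aux_sqrt_quad (s-1) cc hcc0 hs10
          (by linarith only [hccK, hs1sq, hn300, hnsq, hn1, hK1])
        rw [← hxs2, ← hF2def, ← hr2def] at h
        exact h
      have hF1e : F1 = r1 + (s - cc/(2*s)) := by rw [hr1def]; ring
      have hF2e : F2 = r2 + ((s-1) - cc/(2*(s-1))) := by rw [hr2def]; ring
      have hBB1 : lagB γ (j-1) n = (2*s+1)/(n:ℝ) := by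
        unfold lagB
        rw [hc1, hsdef]; ring_nf
      have hBB2 : lagB γ (j-2) n = (2*s-1)/(n:ℝ) := by
        unfold lagB
        rw [hc2, hsdef]; ring_nf
      have e1 : (lagB γ (j-1) n - lagA γ j n) * lagA γ (j-2) n
          - (lagB γ (j-2) n - lagA γ (j-1) n) * lagA γ (j-1) n
          = ((2*s+1)*F2 - F*F2 - (2*s-1)*F1 + F1^2)/(n:ℝ)^2 := by
        rw [hBB1, hBB2]
        unfold lagA
        rw [hc1, hc2, ← hFdef, ← hF1def, ← hF2def]
        field_simp
        ring
      have e2 : (2*s+1)*F2 - F*F2 - (2*s-1)*F1 + F1^2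
          = (2*s+1)*r2 - (2*s-1)*r1 - cc*(4*s-1)/(2*(s*(s-1))) - (D - A) := by
        rw [hFD, hF1sq, hF1e, hF2e]
        field_simp
        ring
      have hsum2 : (lagB γ (j-1) n - lagA γ j n) * lagA γ (j-2) n
          - (lagB γ (j-2) n - lagA γ (j-1) n) * lagA γ (j-1) n
          - (-(γ^2)/(2*(n:ℝ)^3))
          = ((2*s+1)*r2 - (2*s-1)*r1 - 3*cc/(2*(s*(s-1))))/(n:ℝ)^2
            - (D - A)/(n:ℝ)^2 + (γ^2/2)*(s-(n:ℝ))/(s*(n:ℝ)^3) := by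
        rw [e1, e2, hccdef]
        field_simp
        ring
      -- multiplied bounds
      have hs3 : (n:ℝ)^3/8 ≤ s^3 := by
        have h := pow_le_pow_left₀ (by positivity : (0:ℝ) ≤ (n:ℝ)/2) hs_lb 3
        rw [div_pow] at h
        norm_num at h
        linarith
      have hs13 : (n:ℝ)^3/64 ≤ (s-1)^3 := by
        have h := pow_le_pow_left₀ (by positivity : (0:ℝ) ≤ (n:ℝ)/4) hs1_lb 3
        rw [div_pow] at h
        norm_num at h
        linarith
      have hccsq : cc^2 ≤ K^2/16 := by
        nlinarith only [hcc0, hK0, hccK]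
      have hr1m : |r1| * (n:ℝ)^3 ≤ K^2/4 := by
        have h1 : cc^2/(2*s^3) * (n:ℝ)^3 ≤ K^2/4 := by
          rw [div_mul_eq_mul_div, div_le_iff₀ (by positivity)]
          linarith only [mul_le_mul_of_nonneg_left hs3 (by positivity : (0:ℝ) ≤ K^2),
            mul_le_mul_of_nonneg_right hccsq (by positivity : (0:ℝ) ≤ (n:ℝ)^3)]
        calc |r1| * (n:ℝ)^3 ≤ cc^2/(2*s^3) * (n:ℝ)^3 :=
              mul_le_mul_of_nonneg_right hr1b (by positivity)
          _ ≤ K^2/4 := h1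
      have hr2m : |r2| * (n:ℝ)^3 ≤ 2*K^2 := by
        have h1 : cc^2/(2*(s-1)^3) * (n:ℝ)^3 ≤ 2*K^2 := by
          rw [div_mul_eq_mul_div, div_le_iff₀ (by positivity)]
          linarith only [mul_le_mul_of_nonneg_left hs13 (by positivity : (0:ℝ) ≤ K^2),
            mul_le_mul_of_nonneg_right hccsq (by positivity : (0:ℝ) ≤ (n:ℝ)^3)]
        calc |r2| * (n:ℝ)^3 ≤ cc^2/(2*(s-1)^3) * (n:ℝ)^3 :=
              mul_le_mul_of_nonneg_right hr2b (by positivity)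
          _ ≤ 2*K^2 := h1
      have hNum : |(2*s+1)*r2 - (2*s-1)*r1 - 3*cc/(2*(s*(s-1)))| * (n:ℝ)^2 ≤ 14*K^2 := by
        have ha : |(2*s+1)*r2| * (n:ℝ)^2 ≤ 10*K^2 := by
          rw [abs_mul, abs_of_pos (by linarith : (0:ℝ) < 2*s+1)]
          have h5 : 2*s+1 ≤ 5*(n:ℝ) := by linarith
          calc (2*s+1) * |r2| * (n:ℝ)^2 ≤ 5*(n:ℝ) * |r2| * (n:ℝ)^2 := by
                apply mul_le_mul_of_nonneg_right
                  (mul_le_mul_of_nonneg_right h5 (abs_nonneg _)) (sq_nonneg _)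
            _ = 5*(|r2| * (n:ℝ)^3) := by ring
            _ ≤ 5*(2*K^2) := by linarith only [hr2m]
            _ = 10*K^2 := by ring
        have hb : |(2*s-1)*r1| * (n:ℝ)^2 ≤ K^2 := by
          rw [abs_mul, abs_of_pos (by linarith : (0:ℝ) < 2*s-1)]
          have h5 : 2*s-1 ≤ 4*(n:ℝ) := by linarith
          calc (2*s-1) * |r1| * (n:ℝ)^2 ≤ 4*(n:ℝ) * |r1| * (n:ℝ)^2 := by
                apply mul_le_mul_of_nonneg_right
                  (mul_le_mul_of_nonneg_right h5 (abs_nonneg _)) (sq_nonneg _)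
            _ = 4*(|r1| * (n:ℝ)^3) := by ring
            _ ≤ 4*(K^2/4) := by linarith only [hr1m]
            _ = K^2 := by ring
        have hss1 : (n:ℝ)^2/8 ≤ s*(s-1) := by
          have := mul_le_mul hs_lb hs1_lb (by positivity) (by linarith)
          calc (n:ℝ)^2/8 = (n:ℝ)/2 * ((n:ℝ)/4) := by ring
            _ ≤ s*(s-1) := this
        have hcben : |3*cc/(2*(s*(s-1)))| * (n:ℝ)^2 ≤ 3*K := by
          rw [abs_div, abs_of_nonneg (by linarith : (0:ℝ) ≤ 3*cc),
            abs_of_pos (by linarith only [hss1, hn0, hnsq] : (0:ℝ) < 2*(s*(s-1))),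
            div_mul_eq_mul_div, div_le_iff₀ (by linarith only [hss1, hn0, hnsq])]
          nlinarith only [hss1, hccK, hn0, hK0, hcc0,
            mul_le_mul_of_nonneg_right hccK (sq_nonneg (n:ℝ)),
            mul_le_mul_of_nonneg_left hss1 hK0.le]
        calc |(2*s+1)*r2 - (2*s-1)*r1 - 3*cc/(2*(s*(s-1)))| * (n:ℝ)^2
            ≤ (|(2*s+1)*r2| + |(2*s-1)*r1| + |3*cc/(2*(s*(s-1)))|) * (n:ℝ)^2 := by
              apply mul_le_mul_of_nonneg_right ?_ (sq_nonneg _)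
              calc |(2*s+1)*r2 - (2*s-1)*r1 - 3*cc/(2*(s*(s-1)))|
                  = |(2*s+1)*r2 + (-((2*s-1)*r1)) + (-(3*cc/(2*(s*(s-1)))))| := by
                    rw [sub_eq_add_neg, sub_eq_add_neg]
                _ ≤ |(2*s+1)*r2| + |(-((2*s-1)*r1))| + |(-(3*cc/(2*(s*(s-1)))))| :=
                    abs_add_three _ _ _
                _ = |(2*s+1)*r2| + |(2*s-1)*r1| + |3*cc/(2*(s*(s-1)))| := by
                    rw [abs_neg, abs_neg]
          _ = |(2*s+1)*r2| * (n:ℝ)^2 + |(2*s-1)*r1| * (n:ℝ)^2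
              + |3*cc/(2*(s*(s-1)))| * (n:ℝ)^2 := by ring
          _ ≤ 10*K^2 + K^2 + 3*K := by linarith only [ha, hb, hcben]
          _ ≤ 14*K^2 := by nlinarith only [hK1, hK0]
      have hsn : |s - (n:ℝ)| ≤ (n:ℝ)^β + 2*K := by
        rw [hsdef]
        have : (j:ℝ) - 1 + γ/2 - (n:ℝ) = ((j:ℝ) - (n:ℝ)) + (γ/2 - 1) := by ring
        rw [this]
        calc |((j:ℝ) - (n:ℝ)) + (γ/2 - 1)| ≤ |(j:ℝ) - (n:ℝ)| + |γ/2 - 1| := abs_add_le _ _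
          _ ≤ (n:ℝ)^β + 2*K := by
              have h1 : |γ/2 - 1| ≤ 2*K := by
                rw [abs_le]; constructor <;> linarith
              linarith [hjB]
      -- assemble
      rw [hsum2]
      have hrpow : (n:ℝ)^(β-4) = (n:ℝ)^β/(n:ℝ)^4 := by
        rw [Real.rpow_sub hn0]
        congr 1
        rw [show (4:ℝ) = ((4:ℕ):ℝ) by norm_num, Real.rpow_natCast]
      have hq1 : |((2*s+1)*r2 - (2*s-1)*r1 - 3*cc/(2*(s*(s-1))))/(n:ℝ)^2| ≤ 14*K^2/(n:ℝ)^4 := by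
        rw [abs_div, abs_of_pos (by positivity : (0:ℝ) < (n:ℝ)^2),
          div_le_div_iff₀ (by positivity) (by positivity)]
        calc |(2*s+1)*r2 - (2*s-1)*r1 - 3*cc/(2*(s*(s-1)))| * (n:ℝ)^4
            = |(2*s+1)*r2 - (2*s-1)*r1 - 3*cc/(2*(s*(s-1)))| * (n:ℝ)^2 * (n:ℝ)^2 := by ring
          _ ≤ 14*K^2 * (n:ℝ)^2 := mul_le_mul_of_nonneg_right hNum (sq_nonneg _)
      have hq2 : |(D - A)/(n:ℝ)^2| ≤ 8*K/(n:ℝ)^4 := by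
        rw [abs_div, abs_of_pos (by positivity : (0:ℝ) < (n:ℝ)^2),
          div_le_div_iff₀ (by positivity) (by positivity)]
        calc |D - A| * (n:ℝ)^4 = |D - A| * (n:ℝ)^2 * (n:ℝ)^2 := by ring
          _ ≤ 8*K * (n:ℝ)^2 := mul_le_mul_of_nonneg_right hδ' (sq_nonneg _)
      have hq3 : |(γ^2/2)*(s-(n:ℝ))/(s*(n:ℝ)^3)| ≤ (K*(n:ℝ)^β + 2*K^2)/(n:ℝ)^4 := by
        rw [abs_div, abs_of_pos (by positivity : (0:ℝ) < s*(n:ℝ)^3), abs_mul,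
          abs_of_nonneg (by positivity : (0:ℝ) ≤ γ^2/2),
          div_le_div_iff₀ (by positivity) (by positivity)]
        have hBnn : (0:ℝ) ≤ (n:ℝ)^β := le_trans zero_le_one hB1
        have h1 : γ^2/2 * |s - (n:ℝ)| ≤ K/2 * ((n:ℝ)^β + 2*K) := by
          apply mul_le_mul ?_ hsn (abs_nonneg _) (by positivity)
          rw [hKdef]; linarith
        have h2 := mul_le_mul_of_nonneg_right h1 (by positivity : (0:ℝ) ≤ (n:ℝ)^4)
        have h3 : (K*(n:ℝ)^β + 2*K^2) * ((n:ℝ)^4/2) ≤ (K*(n:ℝ)^β + 2*K^2) * (s*(n:ℝ)^3) := by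
          apply mul_le_mul_of_nonneg_left ?_ (by positivity)
          calc (n:ℝ)^4/2 = (n:ℝ)/2 * (n:ℝ)^3 := by ring
            _ ≤ s * (n:ℝ)^3 := mul_le_mul_of_nonneg_right hs_lb (by positivity)
        calc γ^2/2 * |s - (n:ℝ)| * (n:ℝ)^4 ≤ K/2 * ((n:ℝ)^β + 2*K) * (n:ℝ)^4 := h2
          _ = (K*(n:ℝ)^β + 2*K^2) * ((n:ℝ)^4/2) := by ring
          _ ≤ (K*(n:ℝ)^β + 2*K^2) * (s*(n:ℝ)^3) := h3
      calc |((2*s+1)*r2 - (2*s-1)*r1 - 3*cc/(2*(s*(s-1))))/(n:ℝ)^2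
            - (D - A)/(n:ℝ)^2 + (γ^2/2)*(s-(n:ℝ))/(s*(n:ℝ)^3)|
          = |((2*s+1)*r2 - (2*s-1)*r1 - 3*cc/(2*(s*(s-1))))/(n:ℝ)^2
            + (-((D - A)/(n:ℝ)^2)) + (γ^2/2)*(s-(n:ℝ))/(s*(n:ℝ)^3)| := by
            rw [sub_eq_add_neg ((((2*s+1)*r2 - (2*s-1)*r1 - 3*cc/(2*(s*(s-1))))/(n:ℝ)^2)) (((D - A)/(n:ℝ)^2))]
        _ ≤ |((2*s+1)*r2 - (2*s-1)*r1 - 3*cc/(2*(s*(s-1))))/(n:ℝ)^2|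
            + |(-((D - A)/(n:ℝ)^2))| + |(γ^2/2)*(s-(n:ℝ))/(s*(n:ℝ)^3)| := abs_add_three _ _ _
        _ = |((2*s+1)*r2 - (2*s-1)*r1 - 3*cc/(2*(s*(s-1))))/(n:ℝ)^2|
            + |(D - A)/(n:ℝ)^2| + |(γ^2/2)*(s-(n:ℝ))/(s*(n:ℝ)^3)| := by rw [abs_neg]
        _ ≤ 14*K^2/(n:ℝ)^4 + 8*K/(n:ℝ)^4 + (K*(n:ℝ)^β + 2*K^2)/(n:ℝ)^4 := by
            linarith only [hq1, hq2, hq3]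
        _ = (14*K^2 + 8*K + (K*(n:ℝ)^β + 2*K^2))/(n:ℝ)^4 := by
            rw [← add_div, ← add_div]
        _ ≤ (100*K^2*(n:ℝ)^β)/(n:ℝ)^4 := by
            rw [div_le_div_iff_of_pos_right (by positivity)]
            nlinarith only [hB1, hK1, hK0,
              mul_le_mul_of_nonneg_left hB1 (by positivity : (0:ℝ) ≤ K^2),
              mul_le_mul_of_nonneg_left hK1 hK0.le]
        _ = 100*K^2 * (n:ℝ)^(β-4) := by
            rw [hrpow]
            ring
  · -- Part (iii)
    have hcast : ((n-1 : ℕ):ℝ) = (n:ℝ) - 1 := by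
      have h1 : 1 ≤ n := by exact_mod_cast hn1
      rw [Nat.cast_sub h1]; norm_num
    obtain ⟨t, htdef⟩ : ∃ t : ℝ, t = (n:ℝ) - 1/2 + γ/2 := ⟨_, rfl⟩
    obtain ⟨c', hc'def⟩ : ∃ c' : ℝ, c' = (γ^2+1)/4 := ⟨_, rfl⟩
    have hc'K : c' = K/4 := by rw [hc'def, hKdef]; ring
    have hc'0 : 0 < c' := by rw [hc'K]; positivity
    obtain ⟨M, hMdef⟩ : ∃ M : ℝ, M = t^2 - c' := ⟨_, rfl⟩
    have ht_lb : (n:ℝ)/2 ≤ t := by rw [htdef]; linarith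
    have ht_ub : t ≤ 2*(n:ℝ) := by rw [htdef]; linarith
    have ht0 : 0 < t := by linarith
    have ht2 : (n:ℝ)^2/4 ≤ t^2 := by
      calc (n:ℝ)^2/4 = ((n:ℝ)/2)^2 := by ring
        _ ≤ t^2 := pow_le_pow_left₀ (by positivity) ht_lb 2
    have h2K : 2*K ≤ (n:ℝ)^2 := by linarith
    have hM_lb : (n:ℝ)^2/8 ≤ M := by
      rw [hMdef, hc'K]; linarith
    have hM0 : 0 < M := by
      have : (0:ℝ) < (n:ℝ)^2/8 := by positivity
      linarith
    have hPid : (n:ℝ)*((n:ℝ)+γ) * (((n:ℝ)-1)*(((n:ℝ)-1)+γ)) = M^2 - γ^2/4 := by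
      rw [hMdef, htdef, hc'def]; ring
    have hP0 : (0:ℝ) ≤ (n:ℝ)*((n:ℝ)+γ) * (((n:ℝ)-1)*(((n:ℝ)-1)+γ)) := by
      apply mul_nonneg (mul_nonneg hn0.le (by linarith)) (mul_nonneg (by linarith) (by linarith))
    have hMG0 : (0:ℝ) ≤ M^2 - γ^2/4 := by rw [← hPid]; exact hP0
    obtain ⟨u, hudef⟩ : ∃ u : ℝ, u = Real.sqrt (M^2 - γ^2/4) := ⟨_, rfl⟩
    have hu0 : 0 ≤ u := hudef ▸ Real.sqrt_nonneg _
    have hprod_eq : lagA γ n n * lagA γ (n-1) n = u / (n:ℝ)^2 := by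
      unfold lagA
      rw [hcast, div_mul_div_comm, ← Real.sqrt_mul (mul_nonneg hn0.le (by linarith)), hPid,
        ← hudef]
      congr 1
      ring
    obtain ⟨v, hvdef⟩ : ∃ v : ℝ, v = Real.sqrt u := ⟨_, rfl⟩
    obtain ⟨w, hwdef⟩ : ∃ w : ℝ, w = Real.sqrt M := ⟨_, rfl⟩
    have hsqrt : Real.sqrt (u/(n:ℝ)^2) = v / (n:ℝ) := by
      rw [Real.sqrt_div hu0, hvdef, Real.sqrt_sq hn0.le]
    have hv0 : 0 ≤ v := hvdef ▸ Real.sqrt_nonneg _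
    have hw0 : 0 ≤ w := hwdef ▸ Real.sqrt_nonneg _
    have hv2 : v^2 = u := by rw [hvdef]; exact Real.sq_sqrt hu0
    have hw2 : w^2 = M := by rw [hwdef]; exact Real.sq_sqrt hM0.le
    have huM : |u - M| ≤ (γ^2/4) / M := by
      rw [hudef]; exact aux_sqrt_lin M (γ^2/4) (by positivity) hM0 hMG0
    have huM' : |u - M| * (n:ℝ)^2 ≤ 2*K := by
      have h1 : |u - M| * M ≤ γ^2/4 := by
        rw [← le_div_iff₀ hM0]; exact huM
      calc |u - M| * (n:ℝ)^2 ≤ |u - M| * (8*M) :=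
            mul_le_mul_of_nonneg_left (by linarith) (abs_nonneg _)
        _ = 8*(|u - M| * M) := by ring
        _ ≤ 8*(γ^2/4) := by linarith
        _ ≤ 2*K := by rw [hKdef]; linarith [sq_nonneg γ]
    have hw_lb : (n:ℝ)/3 ≤ w := by
      have h9 : ((n:ℝ)/3)^2 ≤ w^2 := by
        rw [hw2]
        calc ((n:ℝ)/3)^2 = (n:ℝ)^2/9 := by ring
          _ ≤ (n:ℝ)^2/8 := by linarith [sq_nonneg (n:ℝ)]
          _ ≤ M := hM_lb
      exact aux_sq_le hw0 (by positivity) h9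
    have hvw : |v - w| * (n:ℝ)^3 ≤ 6*K := by
      have hsum : (n:ℝ)/3 ≤ v + w := by linarith
      have heq : |v - w| * (v + w) = |u - M| := by
        rw [← abs_of_nonneg (show (0:ℝ) ≤ v + w by linarith), ← abs_mul]
        congr 1
        linear_combination hv2 - hw2
      have h1 : |v - w| * ((n:ℝ)/3) ≤ |u - M| := by
        rw [← heq]
        exact mul_le_mul_of_nonneg_left hsum (abs_nonneg _)
      have h2 := mul_le_mul_of_nonneg_right h1 (sq_nonneg (n:ℝ))
      calc |v - w| * (n:ℝ)^3 = 3*(|v - w| * ((n:ℝ)/3) * (n:ℝ)^2) := by ring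
        _ ≤ 3*(|u - M| * (n:ℝ)^2) := by linarith
        _ ≤ 3*(2*K) := by linarith
        _ = 6*K := by ring
    have hrw : |w - (t - c'/(2*t))| ≤ c'^2/(2*t^3) := by
      have h := aux_sqrt_quad t c' hc'0.le ht0 (by rw [hc'K]; linarith)
      rw [← hMdef, ← hwdef] at h
      exact h
    have ht3 : (n:ℝ)^3/8 ≤ t^3 := by
      have h := pow_le_pow_left₀ (by positivity : (0:ℝ) ≤ (n:ℝ)/2) ht_lb 3
      rw [div_pow] at h
      norm_num at h
      linarith
    have hrw' : |w - (t - c'/(2*t))| * (n:ℝ)^3 ≤ K^2/4 := by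
      have hcc : c'^2 = K^2/16 := by rw [hc'K]; ring
      have h1 : c'^2/(2*t^3) * (n:ℝ)^3 ≤ K^2/4 := by
        rw [div_mul_eq_mul_div, div_le_iff₀ (by positivity), hcc]
        linarith [mul_le_mul_of_nonneg_left ht3 (sq_nonneg K)]
      calc |w - (t - c'/(2*t))| * (n:ℝ)^3 ≤ c'^2/(2*t^3) * (n:ℝ)^3 :=
            mul_le_mul_of_nonneg_right hrw (by positivity)
        _ ≤ K^2/4 := h1
    have hbB : lagB γ (n-1) n = 2*t/(n:ℝ) := by
      unfold lagB
      rw [hcast, htdef]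
      ring
    have hmain : lagB γ (n-1) n - 2*Real.sqrt (lagA γ n n * lagA γ (n-1) n)
        - (γ^2+1)/(4*(n:ℝ)^2)
        = 2*(w - v)/(n:ℝ) + (-2)*(w - (t - c'/(2*t)))/(n:ℝ)
          + c'*((n:ℝ)-t)/(t*(n:ℝ)^2) := by
      rw [hbB, hprod_eq, hsqrt, hc'def]
      field_simp
      ring
    rw [hmain]
    have hp1 : |2*(w - v)/(n:ℝ)| ≤ 12*K/(n:ℝ)^3 := by
      rw [abs_div, abs_of_pos hn0, div_le_div_iff₀ hn0 (by positivity)]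
      rw [abs_mul, abs_two, abs_sub_comm]
      have h1 : 12*K*1 ≤ 12*K*(n:ℝ) := mul_le_mul_of_nonneg_left hn1 (by positivity)
      linarith [hvw]
    have hp2 : |(-2)*(w - (t - c'/(2*t)))/(n:ℝ)| ≤ K^2/(n:ℝ)^3 := by
      rw [abs_div, abs_of_pos hn0, div_le_div_iff₀ hn0 (by positivity)]
      rw [abs_mul]
      rw [show |(-2:ℝ)| = 2 by norm_num]
      have h1 : K^2*1 ≤ K^2*(n:ℝ) := mul_le_mul_of_nonneg_left hn1 (by positivity)
      linarith only [hrw', sq_nonneg K, h1]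
    have hp3 : |c'*((n:ℝ)-t)/(t*(n:ℝ)^2)| ≤ K^2/(n:ℝ)^3 := by
      have hnt : (n:ℝ) - t = 1/2 - γ/2 := by rw [htdef]; ring
      have hnt' : |(n:ℝ) - t| ≤ K := by
        rw [hnt, abs_le]
        constructor <;> linarith
      rw [abs_div, abs_of_pos (by positivity : (0:ℝ) < t*(n:ℝ)^2), abs_mul,
        abs_of_pos hc'0, div_le_div_iff₀ (by positivity) (by positivity)]
      have h1 : c' * |(n:ℝ) - t| ≤ (K/4)*K :=
        mul_le_mul (le_of_eq hc'K) hnt' (abs_nonneg _) (by positivity)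
      have h2 : (n:ℝ)^3/2 ≤ t*(n:ℝ)^2 := by
        have := mul_le_mul_of_nonneg_right ht_lb (sq_nonneg (n:ℝ))
        linarith
      have h3 := mul_le_mul_of_nonneg_right h1 (by positivity : (0:ℝ) ≤ (n:ℝ)^3)
      have h4 := mul_le_mul_of_nonneg_left h2 (by positivity : (0:ℝ) ≤ K^2)
      calc c' * |(n:ℝ) - t| * (n:ℝ)^3 ≤ K/4*K*(n:ℝ)^3 := h3
        _ ≤ K^2 * (t*(n:ℝ)^2) := by
              linarith only [h4, (by positivity : (0:ℝ) ≤ K^2*(n:ℝ)^3)]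
        _ = K^2 * (t*(n:ℝ)^2) := rfl
    calc |2*(w - v)/(n:ℝ) + (-2)*(w - (t - c'/(2*t)))/(n:ℝ) + c'*((n:ℝ)-t)/(t*(n:ℝ)^2)|
        ≤ |2*(w - v)/(n:ℝ)| + |(-2)*(w - (t - c'/(2*t)))/(n:ℝ)| + |c'*((n:ℝ)-t)/(t*(n:ℝ)^2)| :=
          abs_add_three _ _ _
      _ ≤ 12*K/(n:ℝ)^3 + K^2/(n:ℝ)^3 + K^2/(n:ℝ)^3 := by linarith
      _ = (12*K + K^2 + K^2)/(n:ℝ)^3 := by rw [← add_div, ← add_div]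
      _ ≤ 100*K^2/(n:ℝ)^3 := by
          rw [div_le_div_iff_of_pos_right (by positivity)]
          have h1 : 12*K*1 ≤ 12*K*K := mul_le_mul_of_nonneg_left hK1 (by positivity)
          linarith
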